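/- arXiv:cs/0607145 — 2 statements merged into one kernel-verified Lean document; each statement's English description precedes it below -/
import Mathlib

section
/- Let S be a nonempty closed subset of ℝ² and define r_lct(p) for p ∈ ℝ² as the infimum of all radii r > 0 such that the closed ball B(p, r) ∩ S is disconnected (infimum of the empty set being ∞). Then the set Π(S) = {p ∈ ℝ² : r_lct(p) < ∞}, i.e. the set of points p for which some closed ball centered at p meets S in a disconnected set, is open in the Euclidean topology. -/
open Metric

set_option maxHeartbeats 1000000

/-- The set Π(S) of points `p` such that some closed ball centered at `p`
meets the nonempty closed set `S` in a disconnected set is open. -/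
theorem pi_set_isOpen (S : Set (EuclideanSpace ℝ (Fin 2)))
    (hS : S.Nonempty) (hclosed : IsClosed S) :
    IsOpen {p : EuclideanSpace ℝ (Fin 2) |
      ∃ r > (0 : ℝ), ¬ IsPreconnected (closedBall p r ∩ S)} := by
  rw [Metric.isOpen_iff]
  rintro p ⟨r, hr, hdis⟩
  set K := closedBall p r ∩ S with hK
  have hKc : IsCompact K := (isCompact_closedBall p r).inter_right hclosed
  rw [IsPreconnected] at hdis
  push_neg at hdis
  obtain ⟨u, v, hu, hv, hKuv, ⟨a, haK, hau⟩, ⟨b, hbK, hbv⟩, hsep⟩ := hdis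
  -- the two pieces of the separation
  set A : Set (EuclideanSpace ℝ (Fin 2)) := K ∩ vᶜ with hA
  set B : Set (EuclideanSpace ℝ (Fin 2)) := K ∩ uᶜ with hB
  have hAc : IsCompact A := hKc.inter_right hv.isClosed_compl
  have hBc : IsCompact B := hKc.inter_right hu.isClosed_compl
  have haA : a ∈ A := by
    refine ⟨haK, fun hav => ?_⟩
    have : a ∈ K ∩ (u ∩ v) := ⟨haK, hau, hav⟩
    simp [hsep] at this
  have hbB : b ∈ B := by
    refine ⟨hbK, fun hbu => ?_⟩
    have : b ∈ K ∩ (u ∩ v) := ⟨hbK, hbu, hbv⟩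
    simp [hsep] at this
  have hABdisj : Disjoint A B := by
    rw [Set.disjoint_left]
    rintro x ⟨hxK, hxv⟩ ⟨-, hxu⟩
    rcases hKuv hxK with h | h
    · exact hxu h
    · exact hxv h
  obtain ⟨U, V, hU, hV, hAU, hBV, hUV⟩ :=
    SeparatedNhds.of_isCompact_isCompact hAc hBc hABdisj
  have hKUV : K ⊆ U ∪ V := by
    intro x hx
    by_cases hxv : x ∈ v
    · right
      refine hBV ⟨hx, fun hxu => ?_⟩
      have : x ∈ K ∩ (u ∩ v) := ⟨hx, hxu, hxv⟩
      simp [hsep] at this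
    · exact Or.inl (hAU ⟨hx, hxv⟩)
  -- find ε so that closedBall p (r + 2ε) ∩ S ⊆ U ∪ V
  set D : Set (EuclideanSpace ℝ (Fin 2)) := S ∩ (U ∪ V)ᶜ with hD
  have hDclosed : IsClosed D := hclosed.inter (hU.union hV).isClosed_compl
  have hDK : ∀ y ∈ D, r < dist p y := by
    rintro y ⟨hyS, hyUV⟩
    by_contra h
    push_neg at h
    exact hyUV (hKUV ⟨by rwa [mem_closedBall, dist_comm], hyS⟩)
  obtain ⟨ε, hε, hεD⟩ : ∃ ε > (0 : ℝ), closedBall p (r + 2 * ε) ∩ D = ∅ := by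
    rcases D.eq_empty_or_nonempty with hDe | hDne
    · exact ⟨1, one_pos, by simp [hDe]⟩
    · obtain ⟨y, hyD, hy⟩ := hDclosed.exists_infDist_eq_dist hDne p
      have hry : r < dist p y := hDK y hyD
      refine ⟨(dist p y - r) / 4, by linarith, ?_⟩
      rw [Set.eq_empty_iff_forall_notMem]
      rintro x ⟨hxball, hxD⟩
      have h1 : infDist p D ≤ dist p x := by
        exact infDist_le_dist_of_mem hxD
      rw [hy] at h1
      rw [mem_closedBall, dist_comm] at hxball
      linarith
  refine ⟨ε, hε, fun q hq => ?_⟩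
  rw [mem_ball] at hq
  refine ⟨r + ε, by linarith, fun hpc => ?_⟩
  have hsub : closedBall q (r + ε) ∩ S ⊆ U ∪ V := by
    rintro x ⟨hxq, hxS⟩
    by_contra hx
    have : x ∈ closedBall p (r + 2 * ε) ∩ D := by
      refine ⟨?_, hxS, hx⟩
      rw [mem_closedBall] at hxq ⊢
      calc dist x p ≤ dist x q + dist q p := dist_triangle x q p
        _ ≤ (r + ε) + ε := by linarith
        _ ≤ r + 2 * ε := by linarith
    simp [hεD] at this
  have hmem : ∀ c, c ∈ K → c ∈ closedBall q (r + ε) ∩ S := by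
    rintro c ⟨hcb, hcS⟩
    refine ⟨?_, hcS⟩
    rw [mem_closedBall] at hcb ⊢
    calc dist c q ≤ dist c p + dist p q := dist_triangle c p q
      _ ≤ r + ε := by rw [dist_comm p q] at *; linarith
  have := hpc U V hU hV hsub ⟨a, hmem a haK, hAU haA⟩ ⟨b, hmem b hbK, hBV hbB⟩
  obtain ⟨x, -, hxU, hxV⟩ := this
  exact Set.disjoint_left.mp hUV hxU hxV
end

section
/- If S ⊆ ℝ² is a circle (the set of points at a fixed distance R > 0 from a fixed center c), then for every point p ∈ ℝ² and every r > 0 the intersection of the closed ball B(p,r) with S is connected; hence Π(S) is empty. -/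
open Metric Real Set Complex

namespace CirclePiAux

/-- Reduction of the condition `cos θ ≤ s` to membership of a representative in an arc. -/
lemma cos_le_iff_arc {s : ℝ} (hs : -1 ≤ s) (θ : ℝ) :
    Real.cos θ ≤ s ↔ ∃ x ∈ Icc (Real.arccos s) (2 * π - Real.arccos s),
      ∃ k : ℤ, θ = x + k * (2 * π) := by
  have hπ := Real.pi_pos
  have hα0 : 0 ≤ Real.arccos s := Real.arccos_nonneg s
  have hαπ : Real.arccos s ≤ π := Real.arccos_le_pi s
  constructor
  · intro h
    set x := toIcoMod Real.two_pi_pos 0 θ with hxdef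
    have hmem : x ∈ Ico (0:ℝ) (0 + 2 * π) := toIcoMod_mem_Ico Real.two_pi_pos 0 θ
    have hkey : θ = x + (toIcoDiv Real.two_pi_pos 0 θ) * (2 * π) := by
      have h1 := toIcoMod_add_toIcoDiv_zsmul Real.two_pi_pos 0 θ
      rw [zsmul_eq_mul] at h1
      linarith [h1]
    have hcosx : Real.cos x ≤ s := by
      have : Real.cos θ = Real.cos x := by
        rw [hkey, Real.cos_add_int_mul_two_pi]
      linarith [this ▸ h]
    refine ⟨x, ?_, toIcoDiv Real.two_pi_pos 0 θ, hkey⟩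
    rcases le_or_gt 1 s with hs1 | hs1
    · rw [Real.arccos_eq_zero.2 hs1]
      exact ⟨hmem.1, by linarith [hmem.2]⟩
    · have hcα : Real.cos (Real.arccos s) = s := Real.cos_arccos hs hs1.le
      rcases le_or_gt x π with hxπ | hxπ
      · constructor
        · by_contra hlt
          push_neg at hlt
          have := Real.cos_lt_cos_of_nonneg_of_le_pi hmem.1 hαπ hlt
          rw [hcα] at this; linarith
        · linarith
      · have h2x : Real.cos (2 * π - x) = Real.cos x := Real.cos_two_pi_sub x
        constructor
        · linarith
        · by_contra hlt
          push_neg at hlt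
          have h0 : 0 ≤ 2 * π - x := by linarith [hmem.2]
          have := Real.cos_lt_cos_of_nonneg_of_le_pi h0 hαπ (by linarith)
          rw [hcα, h2x] at this; linarith
  · rintro ⟨x, ⟨hx1, hx2⟩, k, rfl⟩
    rw [Real.cos_add_int_mul_two_pi]
    rcases le_or_gt 1 s with hs1 | hs1
    · exact le_trans (Real.cos_le_one x) hs1
    · have hcα : Real.cos (Real.arccos s) = s := Real.cos_arccos hs hs1.le
      rcases le_or_gt x π with hxπ | hxπ
      · rw [← hcα]
        exact Real.cos_le_cos_of_nonneg_of_le_pi hα0 hxπ hx1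
      · rw [← Real.cos_two_pi_sub, ← hcα]
        exact Real.cos_le_cos_of_nonneg_of_le_pi hα0 (by linarith) (by linarith)

lemma abs_sq_aux (A R x : ℝ) :
    ‖(A : ℂ) + R * Complex.exp (x * I)‖ ^ 2
      = A ^ 2 + 2 * A * R * Real.cos x + R ^ 2 := by
  rw [Complex.sq_norm, Complex.normSq_apply]
  simp only [Complex.add_re, Complex.add_im, Complex.ofReal_re, Complex.ofReal_im,
    Complex.mul_re, Complex.mul_im, Complex.exp_ofReal_mul_I_re, Complex.exp_ofReal_mul_I_im]
  have := Real.sin_sq_add_cos_sq x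
  nlinarith [this]

/-- The main connectivity statement, in `ℂ`. -/
lemma key (c p : ℂ) (R r : ℝ) (hR : 0 < R) (hr : 0 < r) :
    IsPreconnected (closedBall p r ∩ sphere c R) := by
  have hπ := Real.pi_pos
  rcases eq_or_ne (c - p) 0 with hw | hw
  · -- p = c : the intersection is the whole sphere or empty
    have hpc : p = c := by linear_combination -hw
    subst hpc
    rcases le_or_gt R r with hRr | hRr
    · have : closedBall p r ∩ sphere p R = sphere p R := by
        apply inter_eq_self_of_subset_right
        intro y hy
        simp only [mem_sphere_iff_norm] at hy
        simp [mem_closedBall, dist_eq_norm, hy, hRr]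
      rw [this]
      exact (isConnected_sphere (by rw [rank_real_complex]; norm_num) p hR.le).isPreconnected
    · have : closedBall p r ∩ sphere p R = ∅ := by
        ext y
        simp only [mem_inter_iff, mem_closedBall, mem_sphere_iff_norm, mem_empty_iff_false,
          iff_false, not_and, dist_eq_norm]
        intro h1 h2
        rw [h2] at h1; linarith
      rw [this]
      exact isPreconnected_empty
  · -- general case
    set A : ℝ := ‖c - p‖ with hA
    have hA0 : 0 < A := by simpa [hA] using hw
    set φ : ℝ := Complex.arg (c - p) with hφ
    have hwrep : (A : ℂ) * Complex.exp (φ * I) = c - p := Complex.norm_mul_exp_arg_mul_I (c - p)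
    set s : ℝ := (r ^ 2 - A ^ 2 - R ^ 2) / (2 * A * R) with hs
    set g : ℝ → ℂ := fun x => c + (R : ℂ) * Complex.exp ((↑(φ + x) : ℂ) * I) with hg
    -- distance formula
    have hdist : ∀ x : ℝ, dist (g x) p ≤ r ↔ Real.cos x ≤ s := by
      intro x
      have hgx : g x - p = Complex.exp (φ * I) * ((A : ℂ) + R * Complex.exp (x * I)) := by
        show c + (R : ℂ) * Complex.exp ((↑(φ + x) : ℂ) * I) - p
            = Complex.exp (φ * I) * ((A : ℂ) + R * Complex.exp (x * I))
        have harg : (↑(φ + x) : ℂ) * I = ↑φ * I + ↑x * I := by push_cast; ring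
        rw [harg, Complex.exp_add]
        linear_combination -hwrep
      have habs : dist (g x) p ^ 2 = A ^ 2 + 2 * A * R * Real.cos x + R ^ 2 := by
        rw [Complex.dist_eq, hgx, norm_mul, Complex.norm_exp_ofReal_mul_I, one_mul, abs_sq_aux]
      constructor
      · intro h
        have h2 : dist (g x) p ^ 2 ≤ r ^ 2 := by
          have := dist_nonneg (x := g x) (y := p)
          nlinarith
        rw [habs] at h2
        rw [hs, le_div_iff₀ (by positivity)]
        nlinarith
      · intro h
        rw [hs, le_div_iff₀ (by positivity)] at h
        have h2 : dist (g x) p ^ 2 ≤ r ^ 2 := by rw [habs]; nlinarith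
        nlinarith [dist_nonneg (x := g x) (y := p)]
    have hsphere : ∀ x : ℝ, g x ∈ sphere c R := by
      intro x
      simp only [mem_sphere_iff_norm, hg]
      rw [add_sub_cancel_left, norm_mul, Complex.norm_exp_ofReal_mul_I,
        mul_one, Complex.norm_real, Real.norm_eq_abs, abs_of_pos hR]
    -- every sphere point is of the form g x
    have hparam : ∀ y ∈ sphere c R, ∃ θ : ℝ, y = g (θ - φ) := by
      intro y hy
      simp only [mem_sphere_iff_norm] at hy
      refine ⟨Complex.arg (y - c), ?_⟩
      have h1 := Complex.norm_mul_exp_arg_mul_I (y - c)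
      rw [hy] at h1
      show y = c + (R : ℂ) * Complex.exp ((↑(φ + (Complex.arg (y - c) - φ)) : ℂ) * I)
      have h2 : φ + (Complex.arg (y - c) - φ) = Complex.arg (y - c) := by ring
      rw [h2]
      linear_combination -h1
    rcases eq_empty_or_nonempty (closedBall p r ∩ sphere c R) with he | ⟨y₀, hy₀⟩
    · rw [he]; exact isPreconnected_empty
    · -- nonempty, so s ≥ -1
      have hs1 : -1 ≤ s := by
        obtain ⟨θ₀, hθ₀⟩ := hparam y₀ hy₀.2
        have := (hdist (θ₀ - φ)).1 (by rw [← hθ₀]; exact hy₀.1)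
        linarith [Real.neg_one_le_cos (θ₀ - φ)]
      have heq : closedBall p r ∩ sphere c R
          = g '' Icc (Real.arccos s) (2 * π - Real.arccos s) := by
        ext y
        constructor
        · rintro ⟨hy1, hy2⟩
          obtain ⟨θ, rfl⟩ := hparam y hy2
          have hc := (hdist (θ - φ)).1 hy1
          obtain ⟨x, hxmem, k, hk⟩ := (cos_le_iff_arc hs1 (θ - φ)).1 hc
          refine ⟨x, hxmem, ?_⟩
          have hexp : Complex.exp ((↑(φ + x) : ℂ) * I) = Complex.exp ((↑(φ + (θ - φ)) : ℂ) * I) := by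
            have hkc := congrArg (fun t : ℝ => (t : ℂ)) hk
            push_cast at hkc
            have hθx : (↑(φ + (θ - φ)) : ℂ) * I = (↑(φ + x) : ℂ) * I + (k : ℂ) * (2 * (π : ℂ) * I) := by
              push_cast
              linear_combination Complex.I * hkc
            rw [hθx, Complex.exp_add, Complex.exp_int_mul_two_pi_mul_I, mul_one]
          show g x = g (θ - φ)
          simp only [hg]
          rw [hexp]
        · rintro ⟨x, hxmem, rfl⟩
          have : Real.cos x ≤ s := (cos_le_iff_arc hs1 x).2 ⟨x, hxmem, 0, by ring⟩
          exact ⟨(hdist x).2 this, hsphere x⟩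
      rw [heq]
      have hgc : Continuous g := by
        rw [hg]; fun_prop
      exact (isPreconnected_Icc).image g hgc.continuousOn

end CirclePiAux

/-- If `S` is a circle, every closed ball meets it in a connected set, so Π(S) = ∅. -/
theorem pi_set_of_circle_empty (c : EuclideanSpace ℝ (Fin 2)) (R : ℝ) (hR : 0 < R) :
    (∀ p : EuclideanSpace ℝ (Fin 2), ∀ r > (0 : ℝ),
      IsPreconnected (closedBall p r ∩ sphere c R)) ∧
    {p : EuclideanSpace ℝ (Fin 2) |
      ∃ r > (0 : ℝ), ¬ IsPreconnected (closedBall p r ∩ sphere c R)} = ∅ := by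
  have main : ∀ p : EuclideanSpace ℝ (Fin 2), ∀ r > (0 : ℝ),
      IsPreconnected (closedBall p r ∩ sphere c R) := by
    intro p r hr
    set e : ℂ ≃ₗᵢ[ℝ] EuclideanSpace ℝ (Fin 2) := Complex.orthonormalBasisOneI.repr with he
    have hk : IsPreconnected (closedBall (e.symm p) r ∩ sphere (e.symm c) R) :=
      CirclePiAux.key (e.symm c) (e.symm p) R r hR hr
    have himg : e '' (closedBall (e.symm p) r ∩ sphere (e.symm c) R)
        = closedBall p r ∩ sphere c R := by
      rw [Set.image_inter e.injective]
      congr 1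
      · ext y
        simp only [Set.mem_image, mem_closedBall]
        constructor
        · rintro ⟨z, hz, rfl⟩
          rwa [← e.isometry.dist_eq z (e.symm p), LinearIsometryEquiv.apply_symm_apply] at hz
        · intro hy
          exact ⟨e.symm y, by rwa [e.symm.isometry.dist_eq y p], e.apply_symm_apply y⟩
      · ext y
        simp only [Set.mem_image, mem_sphere]
        constructor
        · rintro ⟨z, hz, rfl⟩
          rwa [← e.isometry.dist_eq z (e.symm c), LinearIsometryEquiv.apply_symm_apply] at hz
        · intro hy
          exact ⟨e.symm y, by rwa [e.symm.isometry.dist_eq y c], e.apply_symm_apply y⟩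
    rw [← himg]
    exact hk.image e e.continuous.continuousOn
  refine ⟨main, ?_⟩
  ext p
  simp only [Set.mem_setOf_eq, Set.mem_empty_iff_false, iff_false, not_exists, not_and, not_not]
  intro r hr
  exact main p r hr
end
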